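/- Fix n ≥ 1 and let J denote the standard 2n × 2n symplectic form matrix. Let A be a 2n × 2n complex matrix in the symplectic group (i.e., Aᵀ J A = J) with A · Ā = 1, where Ā denotes the entrywise complex conjugate of A. Then there exists a 2n × 2n complex matrix B with Bᵀ J B = J such that A = B⁻¹ · B̄. -/

import Mathlib

open Matrix


theorem exists_sympl_basis (m : ℕ) :
    ∀ (V : Type) [AddCommGroup V] [Module ℝ V] [FiniteDimensional ℝ V]
      (B : V →ₗ[ℝ] V →ₗ[ℝ] ℝ),
      Module.finrank ℝ V = 2 * m →
      (∀ x, B x x = 0) →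
      (∀ x, (∀ y, B x y = 0) → x = 0) →
      ∃ b : Module.Basis (Fin m ⊕ Fin m) ℝ V,
        ∀ i j, B (b i) (b j) = Matrix.J (Fin m) ℝ i j := by
  have hJ11 : ∀ (M : ℕ) (i j : Fin M), Matrix.J (Fin M) ℝ (Sum.inl i) (Sum.inl j) = 0 := by
    intro M i j; simp [Matrix.J]
  have hJ12 : ∀ (M : ℕ) (i j : Fin M),
      Matrix.J (Fin M) ℝ (Sum.inl i) (Sum.inr j) = if i = j then -1 else 0 := by
    intro M i j; by_cases h : i = j <;> simp [Matrix.J, Matrix.one_apply, h]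
  have hJ21 : ∀ (M : ℕ) (i j : Fin M),
      Matrix.J (Fin M) ℝ (Sum.inr i) (Sum.inl j) = if i = j then 1 else 0 := by
    intro M i j; simp [Matrix.J, Matrix.one_apply]
  have hJ22 : ∀ (M : ℕ) (i j : Fin M), Matrix.J (Fin M) ℝ (Sum.inr i) (Sum.inr j) = 0 := by
    intro M i j; simp [Matrix.J]
  induction m with
  | zero =>
    intro V _ _ _ B hdim halt hnd
    have : Subsingleton V := by
      rw [mul_zero] at hdim
      exact Module.finrank_zero_iff.mp hdim
    exact ⟨Module.Basis.empty V, fun i => isEmptyElim i⟩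
  | succ m ih =>
    intro V _ _ _ B hdim halt hnd
    have hskew : ∀ x y : V, B y x = - B x y := by
      intro x y
      have h := halt (x + y)
      simp only [map_add, LinearMap.add_apply, halt] at h
      linarith
    have hnt : Nontrivial V := by
      apply Module.nontrivial_of_finrank_pos (R := ℝ)
      omega
    obtain ⟨u, hu0⟩ := exists_ne (0 : V)
    obtain ⟨y0, hy0⟩ : ∃ y, B u y ≠ 0 := by
      by_contra h; push_neg at h; exact hu0 (hnd u h)
    set v : V := (-(B u y0)⁻¹) • y0 with hv
    have huv : B u v = -1 := by
      rw [hv, _root_.map_smul, smul_eq_mul, neg_mul, inv_mul_cancel₀ hy0]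
    have hvu : B v u = 1 := by rw [hskew u v, huv]; ring
    set f : V →ₗ[ℝ] ℝ × ℝ := (B u).prod (B v) with hf
    set W := LinearMap.ker f with hW
    have memW : ∀ x, x ∈ W ↔ B u x = 0 ∧ B v x = 0 := by
      intro x
      simp [hW, hf, LinearMap.mem_ker, LinearMap.prod_apply, Prod.ext_iff]
    have hsurj : Function.Surjective f := by
      intro z
      refine ⟨z.2 • u - z.1 • v, ?_⟩
      have h1 : f (z.2 • u - z.1 • v)
          = (z.2 * B u u - z.1 * B u v, z.2 * B v u - z.1 * B v v) := by
        simp [hf, LinearMap.prod_apply, map_sub, _root_.map_smul, smul_eq_mul, Prod.ext_iff]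
      rw [h1, halt u, halt v, huv, hvu]
      ext <;> simp
    have hrange : LinearMap.range f = ⊤ := LinearMap.range_eq_top.mpr hsurj
    have hdimW : Module.finrank ℝ W = 2 * m := by
      have h1 := LinearMap.finrank_range_add_finrank_ker f
      rw [hrange, finrank_top, hdim] at h1
      rw [← hW] at h1
      have h2 : Module.finrank ℝ (ℝ × ℝ) = 2 := by simp
      rw [h2] at h1
      omega
    have hBuW : ∀ w : W, B u (w : V) = 0 := fun w => ((memW w).mp w.2).1
    have hBvW : ∀ w : W, B v (w : V) = 0 := fun w => ((memW w).mp w.2).2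
    have hBWu : ∀ w : W, B (w : V) u = 0 := fun w => by rw [hskew u w, hBuW w, neg_zero]
    have hBWv : ∀ w : W, B (w : V) v = 0 := fun w => by rw [hskew v w, hBvW w, neg_zero]
    set B' : (W : Type) →ₗ[ℝ] (W : Type) →ₗ[ℝ] ℝ := B.compl₁₂ W.subtype W.subtype with hB'
    have hB'app : ∀ (x y : W), B' x y = B (x : V) (y : V) := fun x y => rfl
    have halt' : ∀ x : W, B' x x = 0 := fun x => halt (x : V)
    have hnd' : ∀ x : W, (∀ y : W, B' x y = 0) → x = 0 := by
      intro w hw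
      have hcoe : (w : V) = 0 := by
        apply hnd
        intro x
        have hmem : x - (B v x) • u + (B u x) • v ∈ W := by
          rw [memW]
          constructor
          · simp only [map_sub, map_add, _root_.map_smul, smul_eq_mul, halt, huv]
            ring
          · simp only [map_sub, map_add, _root_.map_smul, smul_eq_mul, halt, hvu]
            ring
        have h0 := hw ⟨_, hmem⟩
        rw [hB'app] at h0
        have hexp : B (w : V) x =
            B (w : V) (x - (B v x) • u + (B u x) • v)
              + (B v x) * B (w : V) u - (B u x) * B (w : V) v := by
          simp only [map_sub, map_add, _root_.map_smul, smul_eq_mul]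
          ring
        rw [hexp, h0, hBWu w, hBWv w]
        ring
      exact Subtype.ext hcoe
    obtain ⟨bW, hbW⟩ := ih W B' hdimW halt' hnd'
    set c : (Fin (m+1) ⊕ Fin (m+1)) → V := fun i =>
      Sum.elim (fun j => Fin.lastCases u (fun k => (bW (Sum.inl k) : V)) j)
               (fun j => Fin.lastCases v (fun k => (bW (Sum.inr k) : V)) j) i with hc
    have hli : LinearIndependent ℝ c := by
      rw [Fintype.linearIndependent_iff]
      intro g hg
      rw [Fintype.sum_sum_type, Fin.sum_univ_castSucc, Fin.sum_univ_castSucc] at hg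
      simp only [hc, Sum.elim_inl, Sum.elim_inr, Fin.lastCases_last,
        Fin.lastCases_castSucc] at hg
      have hgu : g (Sum.inr (Fin.last m)) = 0 := by
        have h := congrArg (B u) hg
        simp only [map_add, map_sum, _root_.map_smul, map_zero, smul_eq_mul, halt, huv,
          hBuW, mul_zero, mul_neg_one, Finset.sum_const_zero, add_zero, zero_add,
          neg_eq_zero] at h
        linarith
      have hgv : g (Sum.inl (Fin.last m)) = 0 := by
        have h := congrArg (B v) hg
        simp only [map_add, map_sum, _root_.map_smul, map_zero, smul_eq_mul, halt, hvu,
          hBvW, mul_zero, mul_one, Finset.sum_const_zero, add_zero, zero_add] at h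
        linarith
      rw [hgu, hgv, zero_smul, zero_smul, add_zero, add_zero] at hg
      have hWzero : ∀ i : Fin m ⊕ Fin m, g (Sum.map Fin.castSucc Fin.castSucc i) = 0 := by
        have key := Fintype.linearIndependent_iff.mp bW.linearIndependent
          (fun i => g (Sum.map Fin.castSucc Fin.castSucc i))
        apply key
        rw [← ZeroMemClass.coe_eq_zero]
        simp only [Submodule.coe_sum, SetLike.val_smul, Fintype.sum_sum_type,
          Sum.map_inl, Sum.map_inr]
        simpa using hg
      intro i
      rcases i with j | j
      · induction j using Fin.lastCases with
        | last => exact hgv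
        | cast k => exact hWzero (Sum.inl k)
      · induction j using Fin.lastCases with
        | last => exact hgu
        | cast k => exact hWzero (Sum.inr k)
    have hcard : Fintype.card (Fin (m+1) ⊕ Fin (m+1)) = Module.finrank ℝ V := by
      rw [hdim, Fintype.card_sum, Fintype.card_fin]
      omega
    refine ⟨basisOfLinearIndependentOfCardEqFinrank hli hcard, ?_⟩
    have hb := coe_basisOfLinearIndependentOfCardEqFinrank hli hcard
    intro i j
    rw [hb]
    have hcl : ∀ k : Fin m, c (Sum.inl k.castSucc) = (bW (Sum.inl k) : V) := fun k => by
      simp [hc]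
    have hcll : c (Sum.inl (Fin.last m)) = u := by simp [hc]
    have hcr : ∀ k : Fin m, c (Sum.inr k.castSucc) = (bW (Sum.inr k) : V) := fun k => by
      simp [hc]
    have hcrl : c (Sum.inr (Fin.last m)) = v := by simp [hc]
    rcases i with i | i
    · induction i using Fin.lastCases with
      | last =>
        rcases j with j | j
        · induction j using Fin.lastCases with
          | last => rw [hcll, hJ11]; exact halt u
          | cast l => rw [hcll, hcl l, hJ11]; exact hBuW _
        · induction j using Fin.lastCases with
          | last => rw [hcll, hcrl, hJ12]; simpa using huv
          | cast l =>
            rw [hcll, hcr l, hJ12, if_neg (Fin.castSucc_lt_last l).ne']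
            exact hBuW _
      | cast k =>
        rcases j with j | j
        · induction j using Fin.lastCases with
          | last => rw [hcl k, hcll, hJ11]; exact hBWu _
          | cast l =>
            rw [hcl k, hcl l, hJ11]
            have h := hbW (Sum.inl k) (Sum.inl l)
            rw [hB'app, hJ11] at h
            exact h
        · induction j using Fin.lastCases with
          | last =>
            rw [hcl k, hcrl, hJ12, if_neg (Fin.castSucc_lt_last k).ne]
            exact hBWv _
          | cast l =>
            rw [hcl k, hcr l, hJ12]
            have h := hbW (Sum.inl k) (Sum.inr l)
            rw [hB'app, hJ12] at h
            rw [h]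
            simp [Fin.castSucc_inj]
    · induction i using Fin.lastCases with
      | last =>
        rcases j with j | j
        · induction j using Fin.lastCases with
          | last => rw [hcrl, hcll, hJ21]; simpa using hvu
          | cast l =>
            rw [hcrl, hcl l, hJ21, if_neg (Fin.castSucc_lt_last l).ne']
            exact hBvW _
        · induction j using Fin.lastCases with
          | last => rw [hcrl, hJ22]; exact halt v
          | cast l => rw [hcrl, hcr l, hJ22]; exact hBvW _
      | cast k =>
        rcases j with j | j
        · induction j using Fin.lastCases with
          | last =>
            rw [hcr k, hcll, hJ21, if_neg (Fin.castSucc_lt_last k).ne]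
            exact hBWu _
          | cast l =>
            rw [hcr k, hcl l, hJ21]
            have h := hbW (Sum.inr k) (Sum.inl l)
            rw [hB'app, hJ21] at h
            rw [h]
            simp [Fin.castSucc_inj]
        · induction j using Fin.lastCases with
          | last => rw [hcr k, hcrl, hJ22]; exact hBWv _
          | cast l =>
            rw [hcr k, hcr l, hJ22]
            have h := hbW (Sum.inr k) (Sum.inr l)
            rw [hB'app, hJ22] at h
            exact h


theorem skew_congruent_J (n : ℕ) (N : Matrix (Fin n ⊕ Fin n) (Fin n ⊕ Fin n) ℝ)
    (hskew : Nᵀ = -N) (hdet : IsUnit N.det) :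
    ∃ R : Matrix (Fin n ⊕ Fin n) (Fin n ⊕ Fin n) ℝ,
      IsUnit R.det ∧ Rᵀ * Matrix.J (Fin n) ℝ * R = N := by
  have hs : ∀ i j, N j i = -N i j := by
    intro i j
    have h := congrFun (congrFun hskew i) j
    simpa [Matrix.transpose_apply, Matrix.neg_apply] using h
  set B : ((Fin n ⊕ Fin n) → ℝ) →ₗ[ℝ] ((Fin n ⊕ Fin n) → ℝ) →ₗ[ℝ] ℝ :=
    Matrix.toLinearMap₂' ℝ N with hB
  have hBapp : ∀ x y, B x y = ∑ i, ∑ j, x i * (y j * N i j) := by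
    intro x y
    rw [hB, Matrix.toLinearMap₂'_apply]
    simp [smul_eq_mul]
  have halt : ∀ x, B x x = 0 := by
    intro x
    rw [hBapp]
    have h3 : (∑ i, ∑ j, x i * (x j * N i j)) = ∑ a, ∑ b, -(x a * (x b * N a b)) := by
      rw [Finset.sum_comm]
      refine Finset.sum_congr rfl fun a _ => Finset.sum_congr rfl fun b _ => ?_
      rw [hs a b]; ring
    simp only [Finset.sum_neg_distrib] at h3
    linarith
  have hnd : ∀ x, (∀ y, B x y = 0) → x = 0 := by
    intro x hx
    have hv : x ᵥ* N = 0 := by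
      funext j
      have h := hx (Pi.single j 1)
      rw [hBapp] at h
      simp only [Pi.single_apply, mul_ite, ite_mul, one_mul, mul_one, mul_zero, zero_mul,
        Finset.sum_ite_eq', Finset.mem_univ, if_true] at h
      simpa [Matrix.vecMul, dotProduct] using h
    have h2 := congrArg (fun z => z ᵥ* N⁻¹) hv
    simpa [Matrix.vecMul_vecMul, Matrix.mul_nonsing_inv _ hdet, Matrix.vecMul_one] using h2
  have hdim : Module.finrank ℝ ((Fin n ⊕ Fin n) → ℝ) = 2 * n := by
    rw [Module.finrank_pi, Fintype.card_sum, Fintype.card_fin]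
    omega
  obtain ⟨b, hb⟩ := exists_sympl_basis n ((Fin n ⊕ Fin n) → ℝ) B hdim halt hnd
  set e := Pi.basisFun ℝ (Fin n ⊕ Fin n) with he
  set R0 : Matrix (Fin n ⊕ Fin n) (Fin n ⊕ Fin n) ℝ := e.toMatrix b with hR0
  have hval : ∀ a c', R0 a c' = b c' a := by
    intro a c'
    rw [hR0, Module.Basis.toMatrix_apply, he, Pi.basisFun_repr]
  have : Invertible R0 := (Matrix.invertibleOfIsUnitDet _ ?_)
  swap
  · have hI := e.invertibleToMatrix b
    rw [← hR0] at hI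
    exact Matrix.isUnit_det_of_invertible R0
  have hR0det : IsUnit R0.det := Matrix.isUnit_det_of_invertible R0
  have hGram : R0ᵀ * N * R0 = Matrix.J (Fin n) ℝ := by
    ext i j
    rw [← hb i j, hBapp]
    have hL : (R0ᵀ * N * R0) i j = ∑ l, ∑ k, R0 k i * N k l * R0 l j := by
      simp only [Matrix.mul_apply, Matrix.transpose_apply, Finset.sum_mul]
    rw [hL, Finset.sum_comm]
    refine Finset.sum_congr rfl fun k _ => Finset.sum_congr rfl fun l _ => ?_
    rw [hval k i, hval l j]
    ring
  refine ⟨R0⁻¹, Matrix.isUnit_nonsing_inv_det _ hR0det, ?_⟩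
  rw [Matrix.transpose_nonsing_inv, ← hGram]
  rw [Matrix.mul_assoc, Matrix.mul_assoc, Matrix.mul_nonsing_inv _ hR0det, Matrix.mul_one]
  rw [← Matrix.mul_assoc, Matrix.nonsing_inv_mul _ (by rwa [Matrix.det_transpose])]
  · rw [Matrix.one_mul]



/-- Triviality of `H¹({1,σ}, Sp(2n, ℂ))` (Example (2), Section 3): any symplectic matrix
`A` (i.e. `Aᵀ J A = J` for the standard symplectic form matrix `J`) with `A · Ā = 1`
(where `Ā` is the entrywise complex conjugate) is of the form `A = B⁻¹ · B̄` for some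
symplectic matrix `B`. -/
theorem h1_sp_2n_complex_trivial (n : ℕ) (hn : 1 ≤ n)
    (A : Matrix (Fin n ⊕ Fin n) (Fin n ⊕ Fin n) ℂ)
    (hsymp : Aᵀ * Matrix.J (Fin n) ℂ * A = Matrix.J (Fin n) ℂ)
    (hA : A * A.map (starRingEnd ℂ) = 1) :
    ∃ B : Matrix (Fin n ⊕ Fin n) (Fin n ⊕ Fin n) ℂ,
      Bᵀ * Matrix.J (Fin n) ℂ * B = Matrix.J (Fin n) ℂ ∧
      A = B⁻¹ * B.map (starRingEnd ℂ) := by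
  classical
  set σc := starRingEnd ℂ with hσc
  have hAdet : IsUnit A.det := Matrix.isUnit_det_of_right_inverse hA
  have hA' : A.map σc * A = 1 := mul_eq_one_comm.mp hA
  have hAbardet : IsUnit (A.map σc).det := Matrix.isUnit_det_of_right_inverse hA'
  -- choice of the scalar
  set Mp : Matrix (Fin n ⊕ Fin n) (Fin n ⊕ Fin n) (Polynomial ℂ) :=
    (Polynomial.C 1 + Polynomial.X * Polynomial.C Complex.I) • 1 +
      (Polynomial.C 1 - Polynomial.X * Polynomial.C Complex.I) • ((A.map σc).map Polynomial.C)
    with hMp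
  set Q : Polynomial ℂ := Mp.det with hQ
  have hQeval : ∀ x : ℂ, Q.eval x =
      ((1 + x * Complex.I) • (1 : Matrix (Fin n ⊕ Fin n) (Fin n ⊕ Fin n) ℂ)
        + (1 - x * Complex.I) • (A.map σc)).det := by
    intro x
    have h1 : Q.eval x = (Polynomial.evalRingHom x) Q := rfl
    rw [h1, hQ, RingHom.map_det]
    congr 1
    ext i j
    simp [hMp, Matrix.map_apply, Matrix.add_apply, Matrix.smul_apply, Matrix.one_apply,
      smul_eq_mul, apply_ite (Polynomial.eval x), mul_ite, mul_comm Complex.I x]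
  have hQI : Q.eval Complex.I ≠ 0 := by
    rw [hQeval]
    have h2 : (1 + Complex.I * Complex.I : ℂ) = 0 := by rw [Complex.I_mul_I]; ring
    have h3 : (1 - Complex.I * Complex.I : ℂ) = 2 := by rw [Complex.I_mul_I]; ring
    rw [h2, h3, zero_smul, zero_add, Matrix.det_smul]
    intro h0
    rcases mul_eq_zero.mp h0 with h | h
    · exact (pow_ne_zero _ two_ne_zero) h
    · exact (isUnit_iff_ne_zero.mp hAbardet) h
  obtain ⟨s, hs⟩ : ∃ s : ℝ, Q.eval (s : ℂ) ≠ 0 := by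
    by_contra h
    push_neg at h
    have hQ0 : Q = 0 := by
      apply Polynomial.eq_zero_of_infinite_isRoot
      apply Set.Infinite.mono (s := Set.range (fun s : ℝ => (s : ℂ)))
      · rintro x ⟨t, rfl⟩; exact h t
      · exact Set.infinite_range_of_injective Complex.ofReal_injective
    rw [hQ0] at hQI; simp at hQI
  set z : ℂ := 1 + s * Complex.I with hz
  have hzbar : σc z = 1 - s * Complex.I := by
    rw [hz]
    simp [hσc, map_add, _root_.map_mul, Complex.conj_I, Complex.conj_ofReal]
    ring
  set Cm : Matrix (Fin n ⊕ Fin n) (Fin n ⊕ Fin n) ℂ :=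
    z • 1 + (σc z) • (A.map σc) with hCm
  have hCdet : IsUnit Cm.det := by
    rw [isUnit_iff_ne_zero]
    have : Cm.det = Q.eval (s : ℂ) := by rw [hQeval, hCm, hzbar, hz]
    rw [this]; exact hs
  have hCbar : Cm.map σc = Cm * A := by
    have h1 : Cm * A = z • A + (σc z) • (1 : Matrix (Fin n ⊕ Fin n) (Fin n ⊕ Fin n) ℂ) := by
      rw [hCm, Matrix.add_mul, Matrix.smul_mul, Matrix.smul_mul, Matrix.one_mul, hA']
    have h2 : Cm.map σc = (σc z) • (1 : Matrix (Fin n ⊕ Fin n) (Fin n ⊕ Fin n) ℂ) + z • A := by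
      rw [hCm]
      ext i j
      simp [Matrix.map_apply, Matrix.add_apply, Matrix.smul_apply, Matrix.one_apply,
        smul_eq_mul, apply_ite σc, apply_ite (starRingEnd ℂ), map_add, _root_.map_mul, Complex.conj_conj, hσc]
    rw [h1, h2, add_comm]
  have hsymp' : (A⁻¹)ᵀ * Matrix.J (Fin n) ℂ * A⁻¹ = Matrix.J (Fin n) ℂ := by
    have e1 : (A⁻¹)ᵀ * Aᵀ = 1 := by
      rw [← Matrix.transpose_mul, Matrix.mul_nonsing_inv _ hAdet, Matrix.transpose_one]
    have e2 : A * A⁻¹ = 1 := Matrix.mul_nonsing_inv _ hAdet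
    calc (A⁻¹)ᵀ * Matrix.J (Fin n) ℂ * A⁻¹
        = (A⁻¹)ᵀ * (Aᵀ * Matrix.J (Fin n) ℂ * A) * A⁻¹ := by rw [hsymp]
      _ = ((A⁻¹)ᵀ * Aᵀ) * Matrix.J (Fin n) ℂ * (A * A⁻¹) := by simp only [Matrix.mul_assoc]
      _ = Matrix.J (Fin n) ℂ := by rw [e1, e2, Matrix.one_mul, Matrix.mul_one]
  set X := Cm⁻¹ with hX
  have hXdet : IsUnit X.det := Matrix.isUnit_nonsing_inv_det _ hCdet
  set Nc := Xᵀ * Matrix.J (Fin n) ℂ * X with hNc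
  have hNdet : IsUnit Nc.det := by
    rw [hNc, Matrix.det_mul, Matrix.det_mul, Matrix.det_transpose]
    exact (hXdet.mul (Matrix.isUnit_det_J (Fin n) ℂ)).mul hXdet
  have hNskew : Ncᵀ = -Nc := by
    rw [hNc]
    simp only [Matrix.transpose_mul, Matrix.transpose_transpose, Matrix.J_transpose,
      Matrix.mul_neg, Matrix.neg_mul, Matrix.mul_assoc]
  have hJmapC : (Matrix.J (Fin n) ℂ).map σc = Matrix.J (Fin n) ℂ := by
    ext i j
    rcases i with i | i <;> rcases j with j | j <;>
      simp [Matrix.J, Matrix.map_apply, Matrix.one_apply, apply_ite, hσc] <;>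
      split_ifs <;> simp
  have hinvmap : (Cm⁻¹).map σc = (Cm.map σc)⁻¹ := by
    have h : Cm.map σc * (Cm⁻¹).map σc = 1 := by
      rw [← Matrix.map_mul, Matrix.mul_nonsing_inv _ hCdet]
      exact Matrix.map_one _ (map_zero σc) (map_one σc)
    exact (Matrix.inv_eq_right_inv h).symm
  have hNbar : Nc.map σc = Nc := by
    rw [hNc, Matrix.map_mul, Matrix.map_mul, Matrix.transpose_map, hJmapC, hX,
      hinvmap, hCbar, Matrix.mul_inv_rev]
    calc (A⁻¹ * Cm⁻¹)ᵀ * Matrix.J (Fin n) ℂ * (A⁻¹ * Cm⁻¹)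
        = (Cm⁻¹)ᵀ * ((A⁻¹)ᵀ * Matrix.J (Fin n) ℂ * A⁻¹) * Cm⁻¹ := by
          rw [Matrix.transpose_mul]; simp only [Matrix.mul_assoc]
      _ = (Cm⁻¹)ᵀ * Matrix.J (Fin n) ℂ * Cm⁻¹ := by rw [hsymp']
  set N0 : Matrix (Fin n ⊕ Fin n) (Fin n ⊕ Fin n) ℝ :=
    Matrix.of (fun i j => (Nc i j).re) with hN0
  have hN0map : N0.map Complex.ofRealHom = Nc := by
    ext i j
    have h := congrFun (congrFun hNbar i) j
    simp only [Matrix.map_apply] at h ⊢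
    exact Complex.conj_eq_iff_re.mp h
  have hN0skew : N0ᵀ = -N0 := by
    ext i j
    have h := congrFun (congrFun hNskew i) j
    simp only [Matrix.transpose_apply, Matrix.neg_apply] at h
    simp only [Matrix.transpose_apply, Matrix.neg_apply, hN0, Matrix.of_apply]
    rw [h, Complex.neg_re]
  have hN0det : IsUnit N0.det := by
    have h := RingHom.map_det Complex.ofRealHom N0
    rw [show Complex.ofRealHom.mapMatrix N0 = N0.map Complex.ofRealHom from rfl, hN0map] at h
    rw [isUnit_iff_ne_zero]
    intro h0
    rw [h0] at h
    simp only [map_zero] at h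
    exact (isUnit_iff_ne_zero.mp hNdet) h.symm
  obtain ⟨R0, hR0det, hR0⟩ := skew_congruent_J n N0 hN0skew hN0det
  set Rc := R0.map Complex.ofRealHom with hRc
  have hRcdet : IsUnit Rc.det := by
    have h := RingHom.map_det Complex.ofRealHom R0
    rw [show Complex.ofRealHom.mapMatrix R0 = R0.map Complex.ofRealHom from rfl, ← hRc] at h
    rw [isUnit_iff_ne_zero, ← h]
    simpa [Complex.ofRealHom_eq_coe] using isUnit_iff_ne_zero.mp hR0det
  have hJmapR : (Matrix.J (Fin n) ℝ).map Complex.ofRealHom = Matrix.J (Fin n) ℂ := by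
    ext i j
    rcases i with i | i <;> rcases j with j | j <;>
      simp [Matrix.J, Matrix.map_apply, Matrix.one_apply, apply_ite] <;>
      split_ifs <;> simp
  have hRcJ : Rcᵀ * Matrix.J (Fin n) ℂ * Rc = Nc := by
    have h := congrArg (fun M => M.map (Complex.ofRealHom : ℝ →+* ℂ)) hR0
    rw [Matrix.map_mul, Matrix.map_mul, Matrix.transpose_map, hJmapR, hN0map] at h
    exact h
  have hRcbar : Rc.map σc = Rc := by
    rw [hRc, Matrix.map_map]
    ext i j
    simp [Matrix.map_apply, Complex.conj_ofReal, hσc]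
  refine ⟨Rc * Cm, ?_, ?_⟩
  · rw [Matrix.transpose_mul]
    calc Cmᵀ * Rcᵀ * Matrix.J (Fin n) ℂ * (Rc * Cm)
        = Cmᵀ * (Rcᵀ * Matrix.J (Fin n) ℂ * Rc) * Cm := by simp only [Matrix.mul_assoc]
      _ = Cmᵀ * Nc * Cm := by rw [hRcJ]
      _ = (Cmᵀ * (Cm⁻¹)ᵀ) * Matrix.J (Fin n) ℂ * (Cm⁻¹ * Cm) := by
          rw [hNc, hX]; simp only [Matrix.mul_assoc]
      _ = Matrix.J (Fin n) ℂ := by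
          rw [← Matrix.transpose_mul, Matrix.nonsing_inv_mul _ hCdet, Matrix.transpose_one,
            Matrix.one_mul, Matrix.mul_one]
  · have hBdet : IsUnit (Rc * Cm).det := by
      rw [Matrix.det_mul]; exact hRcdet.mul hCdet
    have hBbar : (Rc * Cm).map σc = (Rc * Cm) * A := by
      rw [Matrix.map_mul, hRcbar, hCbar, Matrix.mul_assoc]
    rw [hBbar, ← Matrix.mul_assoc, Matrix.nonsing_inv_mul _ hBdet, Matrix.one_mul]
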